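/- Let t ≥ 2, s ≥ 1, and 1 ≤ λ ≤ z−1 be natural numbers, set θ = t·s + λ and q = min(⌊(z−1)/λ⌋, t−1). Define P_CA = {j + s·i : 0 ≤ j ≤ s−1, 0 ≤ i ≤ t−1}, P_CB = {(s−1−k) + θ·l : 0 ≤ k ≤ s−1, 0 ≤ l ≤ t−1}, P_SA = (⋃_{l=0}^{q−1} {t·s + θ·l + w : 0 ≤ w ≤ λ−1}) ∪ {t·s + θ·q + u : 0 ≤ u ≤ z−1−q·λ}, and P_SB = {t·s + θ·(t−1) + r : 0 ≤ r ≤ z−1}. Then for every 0 ≤ i ≤ t−1 and 0 ≤ l ≤ t−1, the important power (s−1) + s·i + θ·l belongs to none of the sumsets P_SB + P_CA, P_SA + P_CB, and P_SA + P_SB. -/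
import Mathlib


open Pointwise

/-- Auxiliary digit argument: an important power cannot equal a sum of the form
`(t·s + θ·l1 + w) + ((s−1−k) + θ·l2)` with `w < lam`. -/
lemma age_digit_aux (s t lam i l l1 l2 w k : ℕ) (hs : 1 ≤ s) (hlam1 : 1 ≤ lam)
    (hw : w < lam) (hsi : s * i + s ≤ t * s)
    (hE : (s - 1) + s * i + (t * s + lam) * l =
        (t * s + (t * s + lam) * l1 + w) + ((s - 1 - k) + (t * s + lam) * l2)) :
    False := by
  rcases le_or_gt l (l1 + l2) with h | h
  · have hx : (t * s + lam) * l ≤ (t * s + lam) * (l1 + l2) :=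
      Nat.mul_le_mul_left _ h
    have hx2 : (t * s + lam) * (l1 + l2) = (t * s + lam) * l1 + (t * s + lam) * l2 := by
      rw [Nat.mul_add]
    omega
  · have hx : (t * s + lam) * (l1 + l2 + 1) ≤ (t * s + lam) * l :=
      Nat.mul_le_mul_left _ (by omega)
    have hx2 : (t * s + lam) * (l1 + l2 + 1)
        = (t * s + lam) * l1 + (t * s + lam) * l2 + (t * s + lam) := by
      rw [Nat.mul_add, Nat.mul_add, Nat.mul_one]
    omega

/-- AGE-CMPC privacy conditions C4–C6 in the branch
0 < λ < z (secret polynomial S_{A_1}), with θ = t·s + λ and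
q = min(⌊(z−1)/λ⌋, t−1). -/
theorem age_conditions_lambda_lt_z (s t z lam : ℕ) (ht : 2 ≤ t) (hs : 1 ≤ s)
    (hlam1 : 1 ≤ lam) (hlam2 : lam ≤ z - 1) :
    ∀ i l, i < t → l < t →
      (s - 1) + s * i + (t * s + lam) * l ∉
        ({n : ℕ | ∃ r, r < z ∧ n = t * s + (t * s + lam) * (t - 1) + r} +
         {n : ℕ | ∃ j i', j < s ∧ i' < t ∧ n = j + s * i'}) ∧
      (s - 1) + s * i + (t * s + lam) * l ∉
        (({n : ℕ | ∃ l' w, l' < min ((z - 1) / lam) (t - 1) ∧ w < lam ∧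
              n = t * s + (t * s + lam) * l' + w} ∪
          {n : ℕ | ∃ u, u ≤ z - 1 - (min ((z - 1) / lam) (t - 1)) * lam ∧
              n = t * s + (t * s + lam) * (min ((z - 1) / lam) (t - 1)) + u}) +
         {n : ℕ | ∃ k l', k < s ∧ l' < t ∧ n = (s - 1 - k) + (t * s + lam) * l'}) ∧
      (s - 1) + s * i + (t * s + lam) * l ∉
        (({n : ℕ | ∃ l' w, l' < min ((z - 1) / lam) (t - 1) ∧ w < lam ∧
              n = t * s + (t * s + lam) * l' + w} ∪
          {n : ℕ | ∃ u, u ≤ z - 1 - (min ((z - 1) / lam) (t - 1)) * lam ∧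
              n = t * s + (t * s + lam) * (min ((z - 1) / lam) (t - 1)) + u}) +
         {n : ℕ | ∃ r, r < z ∧ n = t * s + (t * s + lam) * (t - 1) + r}) := by
  intro i l hi hl
  have hsi : s * i + s ≤ t * s := by
    have h1 : s * (i + 1) ≤ s * t := Nat.mul_le_mul_left _ hi
    have h2 : s * (i + 1) = s * i + s := by rw [Nat.mul_add, Nat.mul_one]
    have h3 : s * t = t * s := Nat.mul_comm s t
    omega
  have hθl : (t * s + lam) * l ≤ (t * s + lam) * (t - 1) :=
    Nat.mul_le_mul_left _ (by omega)
  refine ⟨?_, ?_, ?_⟩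
  · -- C4 : not in P_SB + P_CA
    rintro ⟨x, hx, y, hy, hxy⟩
    dsimp only at hxy
    obtain ⟨r, hr, rfl⟩ := hx
    obtain ⟨j, i', hj, hi', rfl⟩ := hy
    omega
  · -- C5 : not in P_SA + P_CB
    rintro ⟨x, hx, y, hy, hxy⟩
    dsimp only at hxy
    obtain ⟨k, l2, hk, hl2, rfl⟩ := hy
    rcases hx with ⟨l1, w, hl1, hw, rfl⟩ | ⟨u, hu, rfl⟩
    · exact age_digit_aux s t lam i l l1 l2 w k hs hlam1 hw hsi (by omega)
    · rcases Nat.le_total ((z - 1) / lam) (t - 1) with hq | hq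
      · have hmin : min ((z - 1) / lam) (t - 1) = (z - 1) / lam := Nat.min_eq_left hq
        rw [hmin] at hu hxy
        have hdm : lam * ((z - 1) / lam) + (z - 1) % lam = z - 1 := Nat.div_add_mod _ _
        have hdm2 : (z - 1) / lam * lam = lam * ((z - 1) / lam) := Nat.mul_comm _ _
        have hmod : (z - 1) % lam < lam := Nat.mod_lt _ (by omega)
        have hu' : u < lam := by omega
        exact age_digit_aux s t lam i l ((z - 1) / lam) l2 u k hs hlam1 hu' hsi (by omega)
      · have hmin : min ((z - 1) / lam) (t - 1) = t - 1 := Nat.min_eq_right hq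
        rw [hmin] at hu hxy
        omega

  · -- C6 : not in P_SA + P_SB
    rintro ⟨x, hx, y, hy, hxy⟩
    dsimp only at hxy
    obtain ⟨r, hr, rfl⟩ := hy
    rcases hx with ⟨l1, w, hl1, hw, rfl⟩ | ⟨u, hu, rfl⟩
    · omega
    · omega
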